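/- Let G be a (P6, diamond)-free graph containing an induced 5-cycle v1v2v3v4v5, let C_{i,i+2} be the vertices outside the cycle adjacent exactly to v_i and v_{i+2} on the cycle, and A_{i+1} the vertices adjacent only to v_{i+1}. Then every vertex of C_{i,i+2} is anti-complete to every connected component of A_{i+1} containing at least two vertices. -/

import Mathlib

open SimpleGraph

def diamond : SimpleGraph (Fin 4) := (⊤ : SimpleGraph (Fin 4)).deleteEdges {s(0, 1)}

set_option maxHeartbeats 1000000 in
theorem stmt_10 {V : Type*} (G : SimpleGraph V)
    (hP6 : ¬ Nonempty (pathGraph 6 ↪g G))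
    (hD : ¬ Nonempty (diamond ↪g G))
    (v : Fin 5 → V) (hv : Function.Injective v)
    (hC5 : ∀ i j, G.Adj (v i) (v j) ↔ j = i + 1 ∨ i = j + 1)
    (A : Fin 5 → Set V)
    (hA : ∀ i, A i = {u | u ∉ Set.range v ∧ ∀ j, G.Adj u (v j) ↔ j = i})
    (C : Fin 5 → Set V)
    (hC : ∀ i, C i = {u | u ∉ Set.range v ∧ ∀ j, G.Adj u (v j) ↔ (j = i ∨ j = i + 2)}) :
    ∀ i, ∀ c ∈ C i, ∀ (a₁ : V) (h₁ : a₁ ∈ A (i + 1)) (a₂ : V) (h₂ : a₂ ∈ A (i + 1)),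
      a₁ ≠ a₂ → (G.induce (A (i + 1))).Reachable ⟨a₁, h₁⟩ ⟨a₂, h₂⟩ → ¬ G.Adj c a₁ := by
  intro i c hc a₁ h₁ a₂ h₂ hne hreach hadj
  have hc' : c ∉ Set.range v ∧ ∀ j, G.Adj c (v j) ↔ (j = i ∨ j = i + 2) := by
    have := hC i; rw [this] at hc; exact hc
  obtain ⟨hcr, hcadj⟩ := hc'
  have h₁' : a₁ ∉ Set.range v ∧ ∀ j, G.Adj a₁ (v j) ↔ j = i + 1 := by
    have := hA (i+1); rw [this] at h₁; exact h₁
  obtain ⟨h₁r, h₁adj⟩ := h₁'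
  -- get a neighbor a' of a₁ inside A (i+1)
  obtain ⟨p⟩ := hreach
  have hlen : 0 < p.length := by
    rcases Nat.eq_zero_or_pos p.length with h | h
    · exact absurd (congrArg Subtype.val (SimpleGraph.Walk.eq_of_length_eq_zero h)) hne
    · exact h
  have hadj1 := p.adj_getVert_succ hlen
  rw [SimpleGraph.Walk.getVert_zero] at hadj1
  set b := p.getVert 1 with hb
  have ha'A : (b : V) ∈ A (i+1) := b.2
  have hGadj : G.Adj a₁ (b : V) := hadj1
  set a' : V := (b : V) with ha'
  have h₂' : a' ∉ Set.range v ∧ ∀ j, G.Adj a' (v j) ↔ j = i + 1 := by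
    have := hA (i+1); rw [this] at ha'A; exact ha'A
  obtain ⟨h₂r, h₂adj⟩ := h₂'
  -- Fin 5 facts
  have F1 : ∀ k : Fin 5, k + 1 ≠ k := by decide
  have F2 : ∀ k : Fin 5, ¬ (k + 1 = k ∨ k + 1 = k + 2) := by decide
  have F3 : ∀ k : Fin 5, (k = k ∨ k = k + 2) := by decide
  have F4 : ∀ k : Fin 5, ¬ (k = k + 1) := by decide
  have F5 : ∀ k : Fin 5, ¬ (k + 4 = k ∨ k + 4 = k + 2) := by decide
  have F6 : ∀ k : Fin 5, ¬ (k + 3 = k ∨ k + 3 = k + 2) := by decide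
  have F7 : ∀ k : Fin 5, ¬ (k + 4 = k + 1) := by decide
  have F8 : ∀ k : Fin 5, ¬ (k + 3 = k + 1) := by decide
  have F9 : ∀ k : Fin 5, k = (k + 4) + 1 := by decide
  have F10 : ∀ k : Fin 5, k + 4 = (k + 3) + 1 := by decide
  have F11 : ∀ k : Fin 5, ¬ (k + 3 = k + 1 ∨ k = k + 3 + 1) := by decide
  have F12 : ∀ k : Fin 5, (k + 4 : Fin 5) ≠ k := by decide
  have F13 : ∀ k : Fin 5, (k + 3 : Fin 5) ≠ k := by decide
  have F14 : ∀ k : Fin 5, (k + 4 : Fin 5) ≠ k + 3 := by decide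
  have hM5 : ∀ (a b c d e f : V), ![a,b,c,d,e,f] (5 : Fin 6) = f := fun _ _ _ _ _ _ => rfl
  -- basic adjacency facts
  have hca1 : G.Adj c a₁ := hadj
  have hcvi : G.Adj c (v i) := (hcadj i).2 (F3 i)
  have hna1vi : ¬ G.Adj a₁ (v i) := fun h => F4 i ((h₁adj i).1 h)
  have hna'vi : ¬ G.Adj a' (v i) := fun h => F4 i ((h₂adj i).1 h)
  have hncv1 : ¬ G.Adj c (v (i+1)) := fun h => F2 i ((hcadj (i+1)).1 h)
  have ha1v1 : G.Adj a₁ (v (i+1)) := (h₁adj (i+1)).2 rfl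
  have ha'v1 : G.Adj a' (v (i+1)) := (h₂adj (i+1)).2 rfl
  have hne_ca1 : c ≠ a₁ := G.ne_of_adj hca1
  have hne_a1a' : a₁ ≠ a' := G.ne_of_adj hGadj
  have hne_ca' : c ≠ a' := fun h => hna'vi (h ▸ hcvi)
  have hnr_c : ∀ k, c ≠ v k := fun k h => hcr ⟨k, h.symm⟩
  have hnr_a1 : ∀ k, a₁ ≠ v k := fun k h => h₁r ⟨k, h.symm⟩
  have hnr_a' : ∀ k, a' ≠ v k := fun k h => h₂r ⟨k, h.symm⟩
  by_cases hca'adj : G.Adj c a'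
  · -- diamond on c, v(i+1), a₁, a'
    apply hD
    refine ⟨⟨⟨![c, v (i+1), a₁, a'], ?_⟩, ?_⟩⟩
    · intro x y hxy
      fin_cases x <;> fin_cases y <;>
        simp only [Matrix.cons_val_zero, Matrix.cons_val_one, Matrix.head_cons,
          Matrix.cons_val_two, Matrix.tail_cons, Matrix.cons_val_three,
          Matrix.head_fin_const] at hxy <;>
        first
          | rfl
          | exact absurd hxy (hnr_c _)
          | exact absurd hxy.symm (hnr_c _)
          | exact absurd hxy (hnr_a1 _)
          | exact absurd hxy.symm (hnr_a1 _)
          | exact absurd hxy (hnr_a' _)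
          | exact absurd hxy.symm (hnr_a' _)
          | exact absurd hxy hne_ca1
          | exact absurd hxy.symm hne_ca1
          | exact absurd hxy hne_ca'
          | exact absurd hxy.symm hne_ca'
          | exact absurd hxy hne_a1a'
          | exact absurd hxy.symm hne_a1a'
    · intro x y
      fin_cases x <;> fin_cases y <;>
        simp only [RelEmbedding.coe_mk, Function.Embedding.coeFn_mk,
          Matrix.cons_val_zero, Matrix.cons_val_one, Matrix.head_cons,
          Matrix.cons_val_two, Matrix.tail_cons, Matrix.cons_val_three,
          Matrix.head_fin_const, diamond, deleteEdges_adj, top_adj,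
          Set.mem_singleton_iff] <;>
        first
          | exact iff_of_false (G.irrefl) (by decide)
          | exact iff_of_false hncv1 (by decide)
          | exact iff_of_false (fun h => hncv1 h.symm) (by decide)
          | exact iff_of_true hca1 (by decide)
          | exact iff_of_true hca1.symm (by decide)
          | exact iff_of_true hca'adj (by decide)
          | exact iff_of_true hca'adj.symm (by decide)
          | exact iff_of_true ha1v1 (by decide)
          | exact iff_of_true ha1v1.symm (by decide)
          | exact iff_of_true ha'v1 (by decide)
          | exact iff_of_true ha'v1.symm (by decide)
          | exact iff_of_true hGadj (by decide)
          | exact iff_of_true hGadj.symm (by decide)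
  · -- P6: a' a₁ c (v i) (v (i+4)) (v (i+3))
    apply hP6
    have hcv4 : ¬ G.Adj c (v (i+4)) := fun h => F5 i ((hcadj (i+4)).1 h)
    have hcv3 : ¬ G.Adj c (v (i+3)) := fun h => F6 i ((hcadj (i+3)).1 h)
    have ha1v4 : ¬ G.Adj a₁ (v (i+4)) := fun h => F7 i ((h₁adj (i+4)).1 h)
    have ha1v3 : ¬ G.Adj a₁ (v (i+3)) := fun h => F8 i ((h₁adj (i+3)).1 h)
    have ha'v4 : ¬ G.Adj a' (v (i+4)) := fun h => F7 i ((h₂adj (i+4)).1 h)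
    have ha'v3 : ¬ G.Adj a' (v (i+3)) := fun h => F8 i ((h₂adj (i+3)).1 h)
    have hv04 : G.Adj (v i) (v (i+4)) := (hC5 i (i+4)).2 (Or.inr (F9 i))
    have hv43 : G.Adj (v (i+4)) (v (i+3)) := (hC5 (i+4) (i+3)).2 (Or.inr (F10 i))
    have hv03 : ¬ G.Adj (v i) (v (i+3)) := fun h => F11 i ((hC5 i (i+3)).1 h)
    refine ⟨⟨⟨![a', a₁, c, v i, v (i+4), v (i+3)], ?_⟩, ?_⟩⟩
    · intro x y hxy
      fin_cases x <;> fin_cases y <;>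
        simp only [hM5, Matrix.cons_val_zero, Matrix.cons_val_one, Matrix.head_cons,
          Matrix.cons_val_two, Matrix.tail_cons, Matrix.cons_val_three,
          Matrix.cons_val_four, Matrix.head_fin_const] at hxy <;>
        first
          | rfl
          | exact absurd hxy (hnr_c _)
          | exact absurd hxy.symm (hnr_c _)
          | exact absurd hxy (hnr_a1 _)
          | exact absurd hxy.symm (hnr_a1 _)
          | exact absurd hxy (hnr_a' _)
          | exact absurd hxy.symm (hnr_a' _)
          | exact absurd hxy hne_ca1
          | exact absurd hxy.symm hne_ca1
          | exact absurd hxy hne_ca'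
          | exact absurd hxy.symm hne_ca'
          | exact absurd hxy hne_a1a'
          | exact absurd hxy.symm hne_a1a'
          | exact absurd (hv hxy) (F12 i)
          | exact absurd (hv hxy).symm (F12 i)
          | exact absurd (hv hxy) (F13 i)
          | exact absurd (hv hxy).symm (F13 i)
          | exact absurd (hv hxy) (F14 i)
          | exact absurd (hv hxy).symm (F14 i)
    · intro x y
      fin_cases x <;> fin_cases y <;>
        simp only [RelEmbedding.coe_mk, Function.Embedding.coeFn_mk,
          hM5, Matrix.cons_val_zero, Matrix.cons_val_one, Matrix.head_cons,
          Matrix.cons_val_two, Matrix.tail_cons, Matrix.cons_val_three,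
          Matrix.cons_val_four, Matrix.head_fin_const, pathGraph_adj] <;>
        first
          | exact iff_of_false (G.irrefl) (by decide)
          | exact iff_of_true hGadj.symm (by decide)
          | exact iff_of_true hGadj (by decide)
          | exact iff_of_true hca1.symm (by decide)
          | exact iff_of_true hca1 (by decide)
          | exact iff_of_true hcvi (by decide)
          | exact iff_of_true hcvi.symm (by decide)
          | exact iff_of_true hv04 (by decide)
          | exact iff_of_true hv04.symm (by decide)
          | exact iff_of_true hv43 (by decide)
          | exact iff_of_true hv43.symm (by decide)
          | exact iff_of_false hca'adj (by decide)
          | exact iff_of_false (fun h => hca'adj h.symm) (by decide)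
          | exact iff_of_false hna1vi (by decide)
          | exact iff_of_false (fun h => hna1vi h.symm) (by decide)
          | exact iff_of_false hna'vi (by decide)
          | exact iff_of_false (fun h => hna'vi h.symm) (by decide)
          | exact iff_of_false hcv4 (by decide)
          | exact iff_of_false (fun h => hcv4 h.symm) (by decide)
          | exact iff_of_false hcv3 (by decide)
          | exact iff_of_false (fun h => hcv3 h.symm) (by decide)
          | exact iff_of_false ha1v4 (by decide)
          | exact iff_of_false (fun h => ha1v4 h.symm) (by decide)
          | exact iff_of_false ha1v3 (by decide)
          | exact iff_of_false (fun h => ha1v3 h.symm) (by decide)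
          | exact iff_of_false ha'v4 (by decide)
          | exact iff_of_false (fun h => ha'v4 h.symm) (by decide)
          | exact iff_of_false ha'v3 (by decide)
          | exact iff_of_false (fun h => ha'v3 h.symm) (by decide)
          | exact iff_of_false hv03 (by decide)
          | exact iff_of_false (fun h => hv03 h.symm) (by decide)
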